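/- Let p > 1 be an integer and q = p/(p-1). Define m_{2k}^{(p)} = 2 ∑_{j=0}^{p-1} (-1)^{j+p} C(p-1,j) C(j(p-1)/p, 2k+p) for k ≥ 0, where C(x,m) is the generalized binomial coefficient. Then m_0^{(p)} = ((p-1)/p)^p. -/

import Mathlib

/-- Generalized binomial coefficient `C(x, m) = x(x-1)⋯(x-m+1)/m!`. -/
noncomputable def genBinom (x : ℝ) (m : ℕ) : ℝ :=
  (∏ i ∈ Finset.range m, (x - i)) / (Nat.factorial m)

lemma smeval_descPoch (x : ℝ) (n : ℕ) :
    (descPochhammer ℤ n).smeval x = ∏ i ∈ Finset.range n, (x - i) := by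
  induction n with
  | zero => simp [descPochhammer_zero, Polynomial.smeval_one]
  | succ n ih =>
      rw [descPochhammer_succ_right, Polynomial.smeval_mul, ih, Finset.prod_range_succ]
      rw [Polynomial.smeval_sub, Polynomial.smeval_X, Polynomial.smeval_natCast]
      simp

lemma genBinom_eq_choose (x : ℝ) (m : ℕ) : genBinom x m = Ring.choose x m := by
  have h := Ring.descPochhammer_eq_factorial_smul_choose x m
  rw [smeval_descPoch] at h
  have hm : (m.factorial : ℝ) ≠ 0 := Nat.cast_ne_zero.mpr m.factorial_ne_zero
  rw [genBinom, h, nsmul_eq_mul, mul_div_cancel_left₀ _ hm]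

noncomputable def Bs (x : ℝ) : PowerSeries ℝ := PowerSeries.mk fun n => Ring.choose x n

lemma Bs_coeff (x : ℝ) (n : ℕ) : PowerSeries.coeff n (Bs x) = Ring.choose x n :=
  PowerSeries.coeff_mk _ _

lemma Bs_mul (x y : ℝ) : Bs x * Bs y = Bs (x + y) := by
  ext n
  rw [PowerSeries.coeff_mul, Bs_coeff, Ring.add_choose_eq n (Commute.all x y)]
  simp [Bs_coeff]

lemma Bs_zero : Bs 0 = 1 := by
  ext n
  rw [Bs_coeff, PowerSeries.coeff_one]
  rcases n with _ | n
  · simp [Ring.choose_zero_right]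
  · rw [show ((0 : ℝ)) = ((0 : ℕ) : ℝ) by simp, Ring.choose_natCast]
    simp

lemma Bs_pow (x : ℝ) (n : ℕ) : (Bs x) ^ n = Bs (n * x) := by
  induction n with
  | zero => simp [Bs_zero]
  | succ n ih =>
      rw [pow_succ, ih, Bs_mul]
      congr 1
      push_cast
      ring

lemma coeff_one_pow (w : PowerSeries ℝ) (n : ℕ) :
    PowerSeries.coeff 1 (w ^ (n + 1)) =
      (n + 1 : ℝ) * (PowerSeries.constantCoeff w) ^ n * PowerSeries.coeff 1 w := by
  induction n with
  | zero => simp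
  | succ n ih =>
      rw [pow_succ, PowerSeries.coeff_mul]
      rw [Finset.Nat.sum_antidiagonal_eq_sum_range_succ_mk]
      simp only [Finset.sum_range_succ, Finset.sum_range_one]
      rw [ih]
      simp only [PowerSeries.coeff_zero_eq_constantCoeff]
      have : PowerSeries.constantCoeff (w ^ (n+1)) = (PowerSeries.constantCoeff w) ^ (n+1) :=
        map_pow _ _ _
      rw [show (1 - 1 : ℕ) = 0 by rfl, PowerSeries.coeff_zero_eq_constantCoeff, this]
      push_cast
      ring

theorem stmt_19 (p : ℕ) (hp : 1 < p) :
    2 * ∑ j ∈ Finset.range p, (-1 : ℝ) ^ (j + p) * ((p - 1).choose j : ℝ) *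
        genBinom ((j : ℝ) * ((p : ℝ) - 1) / p) (2 * 0 + p) =
      (((p : ℝ) - 1) / p) ^ p := by
  have hp0 : (p : ℝ) ≠ 0 := Nat.cast_ne_zero.mpr (by omega)
  set q : ℝ := ((p : ℝ) - 1) / p with hq
  -- the series u = Bs q - 1
  set v : PowerSeries ℝ := PowerSeries.mk fun n => Ring.choose q (n + 1) with hv
  have hu : Bs q - 1 = PowerSeries.X * v := by
    ext n
    rcases n with _ | n
    · have h0 : (PowerSeries.coeff 0) (Bs q - 1) = 0 := by
        rw [map_sub, Bs_coeff, Ring.choose_zero_right, PowerSeries.coeff_one]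
        simp
      rw [h0, PowerSeries.coeff_zero_eq_constantCoeff, map_mul]
      simp
    · rw [map_sub, Bs_coeff, PowerSeries.coeff_one, PowerSeries.coeff_succ_X_mul]
      simp [hv]
  -- coefficient p of (Bs q - 1)^(p-1), computed via X-factorization
  have hval : PowerSeries.coeff p ((Bs q - 1) ^ (p - 1)) =
      ((p : ℝ) - 1) * q ^ (p - 2) * Ring.choose q 2 := by
    rw [hu, mul_pow, PowerSeries.coeff_X_pow_mul', if_pos (by omega : p - 1 ≤ p),
      show p - (p - 1) = 1 by omega, show p - 1 = (p - 2) + 1 by omega, coeff_one_pow]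
    have h0 : PowerSeries.constantCoeff v = q := by
      simpa [hv, Ring.choose_one_right] using
        (PowerSeries.coeff_zero_eq_constantCoeff (φ := v)).symm
    have h1 : PowerSeries.coeff 1 v = Ring.choose q 2 := by simp [hv]
    rw [h0, h1]
    have : ((p : ℝ) - 2 + 1) = (p : ℝ) - 1 := by ring
    rw [show ((p - 2 : ℕ) : ℝ) = (p : ℝ) - 2 by
      have : (2 : ℕ) ≤ p := hp
      push_cast [Nat.cast_sub this]; ring]
    rw [this]
  -- expansion of (Bs q - 1)^(p-1) by the binomial theorem
  have hexp : PowerSeries.coeff p ((Bs q - 1) ^ (p - 1)) =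
      ∑ j ∈ Finset.range p, (-1 : ℝ) ^ (j + (p - 1)) * ((p - 1).choose j : ℝ) *
        Ring.choose ((j : ℝ) * q) p := by
    rw [sub_pow, show (p - 1) + 1 = p by omega, map_sum]
    refine Finset.sum_congr rfl fun j hj => ?_
    rw [one_pow, mul_one, Bs_pow]
    have hneg : (-1 : PowerSeries ℝ) ^ (j + (p - 1)) =
        PowerSeries.C ((-1 : ℝ) ^ (j + (p - 1))) := by
      rw [map_pow, map_neg, map_one]
    have hc : (((p - 1).choose j : ℕ) : PowerSeries ℝ) =
        PowerSeries.C (((p - 1).choose j : ℕ) : ℝ) := (map_natCast (PowerSeries.C) _).symm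
    rw [hneg, hc, mul_right_comm, ← map_mul, PowerSeries.coeff_C_mul, Bs_coeff]
  -- the goal sum equals minus that coefficient
  have hsign : ∀ j : ℕ, (-1 : ℝ) ^ (j + p) = -(-1 : ℝ) ^ (j + (p - 1)) := by
    intro j
    rw [show j + p = (j + (p - 1)) + 1 by omega, pow_succ]
    ring
  have hgb : ∀ j : ℕ, genBinom ((j : ℝ) * ((p : ℝ) - 1) / p) (2 * 0 + p)
      = Ring.choose ((j : ℝ) * q) p := by
    intro j
    rw [genBinom_eq_choose, mul_div_assoc]
    norm_num
    rfl
  have hsum : ∑ j ∈ Finset.range p, (-1 : ℝ) ^ (j + p) * ((p - 1).choose j : ℝ) *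
        genBinom ((j : ℝ) * ((p : ℝ) - 1) / p) (2 * 0 + p)
      = -(((p : ℝ) - 1) * q ^ (p - 2) * Ring.choose q 2) := by
    rw [← hval, hexp, ← Finset.sum_neg_distrib]
    refine Finset.sum_congr rfl fun j hj => ?_
    rw [hsign j, hgb j]
    ring
  rw [hsum]
  -- final arithmetic
  have hch2 : Ring.choose q 2 = q * (q - 1) / 2 := by
    rw [← genBinom_eq_choose, genBinom]
    norm_num [Finset.prod_range_succ, Nat.factorial]
  rw [hch2]
  have hqpow : (((p : ℝ) - 1) / p) ^ p = q ^ (p - 2) * q ^ 2 := by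
    rw [← pow_add, show (p - 2) + 2 = p by omega]
  rw [hqpow]
  have hq1 : q - 1 = -(1 / p) := by
    rw [hq]
    field_simp
    ring
  rw [hq1]
  have hqp : ((p : ℝ) - 1) = q * p := by rw [hq]; field_simp
  rw [hqp]
  field_simp
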